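/- Let A be a real n × n matrix that is monotone, i.e., ⟨x, Ax⟩ ≥ 0 for every x ∈ ℝⁿ. Then for every real λ with 0 ≤ λ < 1, det(λA + (1−λ)I) > 0, where I is the identity matrix. Consequently, det A ≥ 0. -/
import Mathlib


open Matrix

lemma stmt18_aux {n : ℕ} (A : Matrix (Fin n) (Fin n) ℝ)
    (hA : ∀ x : Fin n → ℝ, 0 ≤ x ⬝ᵥ A.mulVec x) :
    ∀ t : ℝ, 0 ≤ t → t < 1 →
      ((t • A + (1 - t) • (1 : Matrix (Fin n) (Fin n) ℝ)).det ≠ 0) := by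
  intro t ht ht1 hdet
  obtain ⟨v, hv, hveq⟩ := (Matrix.exists_mulVec_eq_zero_iff).2 hdet
  have key : 0 = v ⬝ᵥ (t • A + (1 - t) • (1 : Matrix (Fin n) (Fin n) ℝ)).mulVec v := by
    rw [hveq]; simp
  rw [Matrix.add_mulVec, Matrix.smul_mulVec, Matrix.smul_mulVec,
    Matrix.one_mulVec, dotProduct_add, dotProduct_smul, dotProduct_smul] at key
  have h1 : 0 ≤ t * (v ⬝ᵥ A.mulVec v) := mul_nonneg ht (hA v)
  have h2 : 0 < (1 - t) * (v ⬝ᵥ v) := by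
    apply mul_pos (by linarith)
    have hnn : 0 ≤ v ⬝ᵥ v := Finset.sum_nonneg fun i _ => mul_self_nonneg (v i)
    rcases lt_or_eq_of_le hnn with h | h
    · exact h
    · exact absurd (dotProduct_self_eq_zero.1 h.symm) hv
  simp only [smul_eq_mul] at key
  linarith

theorem stmt18 {n : ℕ} (A : Matrix (Fin n) (Fin n) ℝ)
    (hA : ∀ x : Fin n → ℝ, 0 ≤ x ⬝ᵥ A.mulVec x) :
    (∀ t : ℝ, 0 ≤ t → t < 1 →
      0 < (t • A + (1 - t) • (1 : Matrix (Fin n) (Fin n) ℝ)).det) ∧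
    0 ≤ A.det := by
  set f : ℝ → ℝ := fun t => (t • A + (1 - t) • (1 : Matrix (Fin n) (Fin n) ℝ)).det with hf
  have hcont : Continuous f := by
    apply Continuous.matrix_det
    fun_prop
  have hf0 : f 0 = 1 := by simp [hf]
  have hne : ∀ t : ℝ, 0 ≤ t → t < 1 → f t ≠ 0 := stmt18_aux A hA
  have hpos : ∀ t : ℝ, 0 ≤ t → t < 1 → 0 < f t := by
    intro t ht ht1
    by_contra h
    push_neg at h
    have hlt : f t < 0 := lt_of_le_of_ne h (hne t ht ht1)
    have : (0 : ℝ) ∈ Set.Icc (f t) (f 0) := ⟨le_of_lt hlt, by rw [hf0]; norm_num⟩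
    obtain ⟨s, hs, hfs⟩ := intermediate_value_Icc' ht hcont.continuousOn this
    exact hne s hs.1 (lt_of_le_of_lt hs.2 ht1) hfs
  refine ⟨hpos, ?_⟩
  have hf1 : f 1 = A.det := by simp [hf]
  rw [← hf1]
  have htend : Filter.Tendsto f (nhdsWithin 1 (Set.Ioo (0:ℝ) 1)) (nhds (f 1)) :=
    (hcont.tendsto 1).mono_left nhdsWithin_le_nhds
  have hne' : (nhdsWithin (1:ℝ) (Set.Ioo (0:ℝ) 1)).NeBot := by
    rw [← mem_closure_iff_nhdsWithin_neBot, closure_Ioo (by norm_num : (0:ℝ) ≠ 1)]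
    exact ⟨by norm_num, le_refl 1⟩
  exact ge_of_tendsto htend
    (eventually_nhdsWithin_of_forall fun x hx => (hpos x hx.1.le hx.2).le)
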